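/- For every k, j ∈ {1,2} and every Q ≠ P in ℝ², the Laplacian in Q of H̃_{kj} equals the 2D Stokeslet: ∇² [ (1/32)( δ_{kj} r² (17 − 12 log r) + 2 R_k R_j (4 log r − 5) ) ] = −δ_{kj} log r + R_k R_j/r². -/

import Mathlib

open Real

/-- Partial derivative of a scalar function on ℝ² with respect to the `l`-th coordinate. -/
noncomputable def pd2 (f : EuclideanSpace ℝ (Fin 2) → ℝ) (l : Fin 2)
    (Q : EuclideanSpace ℝ (Fin 2)) : ℝ :=
  fderiv ℝ f Q (EuclideanSpace.single l 1)

namespace StokesAux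

abbrev E2 := EuclideanSpace ℝ (Fin 2)

noncomputable def sb (P : E2) (x : Fin 2 → ℝ) : ℝ := (x 0 - P 0) ^ 2 + (x 1 - P 1) ^ 2

noncomputable def gb (P : E2) (k j : Fin 2) (x : Fin 2 → ℝ) : ℝ :=
  (1 / 32) * ((if k = j then (1 : ℝ) else 0) * sb P x * (17 - 6 * Real.log (sb P x))
    + 2 * (x k - P k) * (x j - P j) * (2 * Real.log (sb P x) - 5))

noncomputable def Fb (P : E2) (k j l : Fin 2) (x : Fin 2 → ℝ) : ℝ :=
  (1 / 32) * (2 * (if k = j then (1 : ℝ) else 0) * (x l - P l) * (11 - 6 * Real.log (sb P x))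
    + 2 * ((if k = l then (1 : ℝ) else 0) * (x j - P j)
        + (if j = l then (1 : ℝ) else 0) * (x k - P k)) * (2 * Real.log (sb P x) - 5)
    + 8 * (x k - P k) * (x j - P j) * (x l - P l) / sb P x)

lemma norm_sq_eq (x : E2) : ‖x‖ ^ 2 = x 0 ^ 2 + x 1 ^ 2 := by
  rw [EuclideanSpace.norm_eq, Real.sq_sqrt (by positivity)]
  simp [Fin.sum_univ_two, sq_abs]

lemma log_norm (x : E2) : Real.log ‖x‖ = Real.log (x 0 ^ 2 + x 1 ^ 2) / 2 := by
  have h : x 0 ^ 2 + x 1 ^ 2 = ‖x‖ ^ 2 := (norm_sq_eq x).symm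
  rw [h, Real.log_pow]; push_cast; ring

lemma subap (x y : E2) (i : Fin 2) : (x - y) i = x i - y i := rfl

lemma coordQ (Q : E2) (t : ℝ) (m i : Fin 2) :
    (Q + t • EuclideanSpace.single m (1 : ℝ)) i = Q i + t * (if i = m then 1 else 0) := by
  simp [EuclideanSpace.single_apply, mul_ite]

lemma sb_pos (P Q : E2) (hQ : Q ≠ P) : 0 < sb P (fun i => Q i) := by
  have h1 : sb P (fun i => Q i) = ‖Q - P‖ ^ 2 := by
    rw [norm_sq_eq]; simp [sb, subap]
  rw [h1]
  have h2 : Q - P ≠ 0 := sub_ne_zero.mpr hQ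
  exact pow_pos (norm_pos_iff.mpr h2) 2

lemma hw (P Q : E2) (l i : Fin 2) :
    HasDerivAt (fun t : ℝ => Q i + t * (if i = l then (1 : ℝ) else 0) - P i)
      (if i = l then (1 : ℝ) else 0) 0 :=
  ((hasDerivAt_mul_const _).const_add (Q i)).sub_const (P i)

lemma hs (P Q : E2) (l : Fin 2) :
    HasDerivAt (fun t : ℝ => sb P (fun i => Q i + t * (if i = l then (1 : ℝ) else 0)))
      (2 * (Q l - P l)) 0 := by
  have h := ((hw P Q l 0).pow 2).add ((hw P Q l 1).pow 2)
  have heq : (fun t : ℝ => sb P (fun i => Q i + t * (if i = l then (1 : ℝ) else 0)))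
      = fun t : ℝ => (Q 0 + t * (if (0 : Fin 2) = l then (1 : ℝ) else 0) - P 0) ^ 2
          + (Q 1 + t * (if (1 : Fin 2) = l then (1 : ℝ) else 0) - P 1) ^ 2 := rfl
  rw [heq]
  refine h.congr_deriv ?_
  fin_cases l <;> simp <;> ring

lemma hlog (P Q : E2) (l : Fin 2) (hQ : Q ≠ P) :
    HasDerivAt (fun t : ℝ => Real.log (sb P (fun i => Q i + t * (if i = l then (1 : ℝ) else 0))))
      (2 * (Q l - P l) / sb P (fun i => Q i)) 0 := by
  have h0 : (fun i => Q i + (0:ℝ) * (if i = l then (1 : ℝ) else 0)) = (fun i => Q i) := by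
    funext i; ring
  have h := (hs P Q l).log (by rw [h0]; exact (sb_pos P Q hQ).ne')
  rw [h0] at h
  exact h

lemma diff_sb (P : E2) (Q : E2) : DifferentiableAt ℝ (fun Q' : E2 => sb P (fun i => Q' i)) Q := by
  have hx : ∀ i : Fin 2, DifferentiableAt ℝ (fun Q' : E2 => Q' i) Q := fun i =>
    differentiableAt_euclidean.1 differentiableAt_id i
  exact (((hx 0).sub_const _).pow 2).add (((hx 1).sub_const _).pow 2)

lemma pd2_congr {f g : E2 → ℝ} {Q : E2} (l : Fin 2) (h : f =ᶠ[nhds Q] g) :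
    pd2 f l Q = pd2 g l Q := by
  unfold pd2; rw [h.fderiv_eq]

lemma key1 (P : E2) (k j l : Fin 2) (Q : E2) (hQ : Q ≠ P) :
    pd2 (fun Q'' =>
        (1 / 32) *
          ((if k = j then (1 : ℝ) else 0) * ‖Q'' - P‖ ^ 2 *
              (17 - 12 * Real.log ‖Q'' - P‖) +
            2 * (Q'' - P) k * (Q'' - P) j * (4 * Real.log ‖Q'' - P‖ - 5))) l Q
      = Fb P k j l (fun i => Q i) := by
  have hS := (sb_pos P Q hQ).ne'
  have hx : ∀ i : Fin 2, DifferentiableAt ℝ (fun Q' : E2 => Q' i) Q := fun i =>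
    differentiableAt_euclidean.1 differentiableAt_id i
  -- rewrite the function into coordinate form
  have hfg : (fun Q'' : E2 =>
        (1 / 32) *
          ((if k = j then (1 : ℝ) else 0) * ‖Q'' - P‖ ^ 2 *
              (17 - 12 * Real.log ‖Q'' - P‖) +
            2 * (Q'' - P) k * (Q'' - P) j * (4 * Real.log ‖Q'' - P‖ - 5)))
      = fun Q'' : E2 => gb P k j (fun i => Q'' i) := by
    funext x
    have h1 : ‖x - P‖ ^ 2 = sb P (fun i => x i) := by
      rw [norm_sq_eq]; simp [sb, subap]
    have h2 : Real.log ‖x - P‖ = Real.log (sb P (fun i => x i)) / 2 := by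
      rw [log_norm]; simp [sb, subap]
    rw [h1, h2]
    simp only [gb, subap]
    ring
  rw [hfg]
  -- differentiability
  have hlogd : DifferentiableAt ℝ (fun Q' : E2 => Real.log (sb P (fun i => Q' i))) Q :=
    (diff_sb P Q).log hS
  have hg : DifferentiableAt ℝ (fun Q' : E2 => gb P k j (fun i => Q' i)) Q := by
    unfold gb
    exact ((((diff_sb P Q).const_mul _).mul
        ((hlogd.const_mul 6).const_sub 17)).add
      (((((hx k).sub_const _).const_mul 2).mul ((hx j).sub_const _)).mul
        ((hlogd.const_mul 2).sub_const 5))).const_mul _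
  -- the line through Q in direction l
  have hγ : HasDerivAt (fun t : ℝ => Q + t • EuclideanSpace.single l (1 : ℝ))
      (EuclideanSpace.single l (1 : ℝ)) 0 := by
    simpa using ((hasDerivAt_id (0 : ℝ)).smul_const (EuclideanSpace.single l (1 : ℝ))).const_add Q
  have h0 : Q + (0 : ℝ) • EuclideanSpace.single l (1 : ℝ) = Q := by simp
  have hf' : HasFDerivAt (fun Q' : E2 => gb P k j (fun i => Q' i))
      (fderiv ℝ (fun Q' : E2 => gb P k j (fun i => Q' i)) Q)
      (Q + (0 : ℝ) • EuclideanSpace.single l (1 : ℝ)) := by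
    rw [h0]; exact hg.hasFDerivAt
  have hcomp := hf'.comp_hasDerivAt 0 hγ
  simp only [Function.comp_def] at hcomp
  -- rewrite the composed function in w-coordinates
  have hfun : (fun t : ℝ => gb P k j (fun i => (Q + t • EuclideanSpace.single l (1 : ℝ)) i))
      = fun t : ℝ => gb P k j (fun i => Q i + t * (if i = l then (1 : ℝ) else 0)) := by
    funext t; congr 1; funext i; exact coordQ Q t l i
  rw [hfun] at hcomp
  -- explicit derivative of the line function
  have HS := hs P Q l
  have HL := hlog P Q l hQ
  have T1 := (HS.const_mul (if k = j then (1 : ℝ) else 0)).mul ((HL.const_mul 6).const_sub 17)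
  have T2 := (((hw P Q l k).const_mul 2).mul (hw P Q l j)).mul ((HL.const_mul 2).sub_const 5)
  have T := (T1.add T2).const_mul (1 / 32 : ℝ)
  have heq : (fun t : ℝ => gb P k j (fun i => Q i + t * (if i = l then (1 : ℝ) else 0)))
      = fun t : ℝ =>
        (1 / 32) * ((if k = j then (1 : ℝ) else 0) *
            sb P (fun i => Q i + t * (if i = l then (1 : ℝ) else 0)) *
            (17 - 6 * Real.log (sb P (fun i => Q i + t * (if i = l then (1 : ℝ) else 0))))
          + 2 * (Q k + t * (if k = l then (1 : ℝ) else 0) - P k) *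
              (Q j + t * (if j = l then (1 : ℝ) else 0) - P j) *
              (2 * Real.log (sb P (fun i => Q i + t * (if i = l then (1 : ℝ) else 0))) - 5)) := rfl
  have hexp : HasDerivAt
      (fun t : ℝ => gb P k j (fun i => Q i + t * (if i = l then (1 : ℝ) else 0)))
      (Fb P k j l (fun i => Q i)) 0 := by
    rw [heq]
    refine (T.congr_deriv ?_)
    have h0' : (fun i => Q i + (0:ℝ) * (if i = l then (1 : ℝ) else 0)) = (fun i => Q i) := by
      funext i; ring
    rw [h0']
    simp only [Fb]
    generalize (if k = j then (1 : ℝ) else 0) = d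
    generalize (if k = l then (1 : ℝ) else 0) = ck
    generalize (if j = l then (1 : ℝ) else 0) = cj
    generalize hs2 : sb P (fun i => Q i) = s
    rw [hs2] at hS
    simp only [Pi.mul_apply, Pi.add_apply]
    field_simp
    ring
  have := hcomp.unique hexp
  simpa [pd2] using this

lemma key2 (P : E2) (k j l : Fin 2) (Q : E2) (hQ : Q ≠ P) :
    pd2 (fun Q' => Fb P k j l (fun i => Q' i)) l Q
      = (1 / 32) * (2 * (if k = j then (1 : ℝ) else 0) *
            (11 - 6 * Real.log (sb P (fun i => Q i)))
          - 2 * (if k = j then (1 : ℝ) else 0) * (Q l - P l) *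
              (6 * (2 * (Q l - P l) / sb P (fun i => Q i)))
          + 2 * ((if k = l then (1 : ℝ) else 0) * (if j = l then (1 : ℝ) else 0)
              + (if j = l then (1 : ℝ) else 0) * (if k = l then (1 : ℝ) else 0)) *
              (2 * Real.log (sb P (fun i => Q i)) - 5)
          + 2 * ((if k = l then (1 : ℝ) else 0) * (Q j - P j)
              + (if j = l then (1 : ℝ) else 0) * (Q k - P k)) *
              (2 * (2 * (Q l - P l) / sb P (fun i => Q i)))
          + (((8 * (if k = l then (1 : ℝ) else 0) * (Q j - P j)
                + 8 * (Q k - P k) * (if j = l then (1 : ℝ) else 0)) * (Q l - P l)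
                + 8 * (Q k - P k) * (Q j - P j)) * sb P (fun i => Q i)
              - 8 * (Q k - P k) * (Q j - P j) * (Q l - P l) * (2 * (Q l - P l)))
            / (sb P (fun i => Q i)) ^ 2) := by
  have hS := (sb_pos P Q hQ).ne'
  have hx : ∀ i : Fin 2, DifferentiableAt ℝ (fun Q' : E2 => Q' i) Q := fun i =>
    differentiableAt_euclidean.1 differentiableAt_id i
  have hlogd : DifferentiableAt ℝ (fun Q' : E2 => Real.log (sb P (fun i => Q' i))) Q :=
    (diff_sb P Q).log hS
  have hg : DifferentiableAt ℝ (fun Q' : E2 => Fb P k j l (fun i => Q' i)) Q := by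
    unfold Fb
    have hA : DifferentiableAt ℝ (fun Q' : E2 =>
        2 * (if k = j then (1 : ℝ) else 0) * (Q' l - P l) *
          (11 - 6 * Real.log (sb P fun i => Q' i))) Q :=
      (((hx l).sub_const _).const_mul _).mul ((hlogd.const_mul 6).const_sub 11)
    have hB : DifferentiableAt ℝ (fun Q' : E2 =>
        2 * ((if k = l then (1 : ℝ) else 0) * (Q' j - P j)
          + (if j = l then (1 : ℝ) else 0) * (Q' k - P k)) *
          (2 * Real.log (sb P fun i => Q' i) - 5)) Q :=
      (((((hx j).sub_const _).const_mul _).add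
        (((hx k).sub_const _).const_mul _)).const_mul 2).mul
        ((hlogd.const_mul 2).sub_const 5)
    have hnum : DifferentiableAt ℝ (fun Q' : E2 =>
        8 * (Q' k - P k) * (Q' j - P j) * (Q' l - P l)) Q :=
      ((((hx k).sub_const _).const_mul 8).mul ((hx j).sub_const _)).mul
        ((hx l).sub_const _)
    have hC : DifferentiableAt ℝ (fun Q' : E2 =>
        8 * (Q' k - P k) * (Q' j - P j) * (Q' l - P l) / sb P (fun i => Q' i)) Q := by
      have h' := hnum.mul ((diff_sb P Q).inv hS)
      simp only [div_eq_mul_inv]; exact h'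
    exact ((hA.add hB).add hC).const_mul _
  have hγ : HasDerivAt (fun t : ℝ => Q + t • EuclideanSpace.single l (1 : ℝ))
      (EuclideanSpace.single l (1 : ℝ)) 0 := by
    simpa using ((hasDerivAt_id (0 : ℝ)).smul_const (EuclideanSpace.single l (1 : ℝ))).const_add Q
  have h0 : Q + (0 : ℝ) • EuclideanSpace.single l (1 : ℝ) = Q := by simp
  have hf' : HasFDerivAt (fun Q' : E2 => Fb P k j l (fun i => Q' i))
      (fderiv ℝ (fun Q' : E2 => Fb P k j l (fun i => Q' i)) Q)
      (Q + (0 : ℝ) • EuclideanSpace.single l (1 : ℝ)) := by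
    rw [h0]; exact hg.hasFDerivAt
  have hcomp := hf'.comp_hasDerivAt 0 hγ
  simp only [Function.comp_def] at hcomp
  have hfun : (fun t : ℝ => Fb P k j l (fun i => (Q + t • EuclideanSpace.single l (1 : ℝ)) i))
      = fun t : ℝ => Fb P k j l (fun i => Q i + t * (if i = l then (1 : ℝ) else 0)) := by
    funext t; congr 1; funext i; exact coordQ Q t l i
  rw [hfun] at hcomp
  have HS := hs P Q l
  have HL := hlog P Q l hQ
  have h0' : (fun i => Q i + (0:ℝ) * (if i = l then (1 : ℝ) else 0)) = (fun i => Q i) := by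
    funext i; ring
  have hS0 : sb P (fun i => Q i + (0:ℝ) * (if i = l then (1 : ℝ) else 0)) ≠ 0 := by
    rw [h0']; exact hS
  have T1 := ((hw P Q l l).const_mul (2 * (if k = j then (1 : ℝ) else 0))).mul
      ((HL.const_mul 6).const_sub 11)
  have T2a := ((hw P Q l j).const_mul (if k = l then (1 : ℝ) else 0)).add
      ((hw P Q l k).const_mul (if j = l then (1 : ℝ) else 0))
  have T2 := (T2a.const_mul 2).mul ((HL.const_mul 2).sub_const 5)
  have T3 := ((((hw P Q l k).const_mul 8).mul (hw P Q l j)).mul (hw P Q l l)).div HS hS0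
  have T := ((T1.add T2).add T3).const_mul (1 / 32 : ℝ)
  have heq : (fun t : ℝ => Fb P k j l (fun i => Q i + t * (if i = l then (1 : ℝ) else 0)))
      = fun t : ℝ =>
        (1 / 32) * ((2 * (if k = j then (1 : ℝ) else 0)) *
              (Q l + t * (if l = l then (1 : ℝ) else 0) - P l) *
              (11 - 6 * Real.log (sb P (fun i => Q i + t * (if i = l then (1 : ℝ) else 0))))
          + 2 * ((if k = l then (1 : ℝ) else 0) *
                (Q j + t * (if j = l then (1 : ℝ) else 0) - P j)
              + (if j = l then (1 : ℝ) else 0) *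
                (Q k + t * (if k = l then (1 : ℝ) else 0) - P k)) *
              (2 * Real.log (sb P (fun i => Q i + t * (if i = l then (1 : ℝ) else 0))) - 5)
          + 8 * (Q k + t * (if k = l then (1 : ℝ) else 0) - P k) *
              (Q j + t * (if j = l then (1 : ℝ) else 0) - P j) *
              (Q l + t * (if l = l then (1 : ℝ) else 0) - P l)
            / sb P (fun i => Q i + t * (if i = l then (1 : ℝ) else 0))) := by
    funext t; simp only [Fb]
  have hexp : HasDerivAt
      (fun t : ℝ => Fb P k j l (fun i => Q i + t * (if i = l then (1 : ℝ) else 0)))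
      (pd2 (fun Q' => Fb P k j l (fun i => Q' i)) l Q) 0 := by
    simpa [pd2] using hcomp
  rw [heq] at hexp
  have := hexp.unique T
  rw [this, h0']
  have hll : (if l = l then (1 : ℝ) else 0) = 1 := if_pos rfl
  rw [hll]
  generalize (if k = j then (1 : ℝ) else 0) = d
  generalize (if k = l then (1 : ℝ) else 0) = ck
  generalize (if j = l then (1 : ℝ) else 0) = cj
  generalize hs2 : sb P (fun i => Q i) = s
  rw [hs2] at hS
  simp only [Pi.mul_apply, Pi.add_apply]
  field_simp
  ring

end StokesAux

/-- The Laplacian in Q of the 2D H̃-function equals the (unnormalized) 2D Stokeslet: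
∇² H̃_{kj} = −δ_{kj} log r + R_k R_j/r². -/
theorem twoD_laplacian_H_eq_stokeslet
    (P : EuclideanSpace ℝ (Fin 2))
    (k j : Fin 2) (Q : EuclideanSpace ℝ (Fin 2)) (hQ : Q ≠ P) :
    (∑ l : Fin 2,
        pd2 (fun Q' =>
          pd2 (fun Q'' =>
            (1 / 32) *
              ((if k = j then (1 : ℝ) else 0) * ‖Q'' - P‖ ^ 2 *
                  (17 - 12 * Real.log ‖Q'' - P‖) +
                2 * (Q'' - P) k * (Q'' - P) j * (4 * Real.log ‖Q'' - P‖ - 5))) l Q') l Q) =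
      -(if k = j then (1 : ℝ) else 0) * Real.log ‖Q - P‖ +
        (Q - P) k * (Q - P) j / ‖Q - P‖ ^ 2 := by
  classical
  have hiso : {x : EuclideanSpace ℝ (Fin 2) | x ≠ P} ∈ nhds Q := isOpen_ne.mem_nhds hQ
  have hstep : ∀ l : Fin 2,
      pd2 (fun Q' =>
        pd2 (fun Q'' =>
          (1 / 32) *
            ((if k = j then (1 : ℝ) else 0) * ‖Q'' - P‖ ^ 2 *
                (17 - 12 * Real.log ‖Q'' - P‖) +
              2 * (Q'' - P) k * (Q'' - P) j * (4 * Real.log ‖Q'' - P‖ - 5))) l Q') l Q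
      = pd2 (fun Q' => StokesAux.Fb P k j l (fun i => Q' i)) l Q := by
    intro l
    have hev : (fun Q' =>
        pd2 (fun Q'' =>
          (1 / 32) *
            ((if k = j then (1 : ℝ) else 0) * ‖Q'' - P‖ ^ 2 *
                (17 - 12 * Real.log ‖Q'' - P‖) +
              2 * (Q'' - P) k * (Q'' - P) j * (4 * Real.log ‖Q'' - P‖ - 5))) l Q')
        =ᶠ[nhds Q] (fun Q' => StokesAux.Fb P k j l (fun i => Q' i)) := by
      filter_upwards [hiso] with x hx
      exact StokesAux.key1 P k j l x hx
    exact StokesAux.pd2_congr l hev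
  rw [Fin.sum_univ_two, hstep 0, hstep 1, StokesAux.key2 P k j 0 Q hQ,
    StokesAux.key2 P k j 1 Q hQ]
  have hS := (StokesAux.sb_pos P Q hQ).ne'
  have hSn : StokesAux.sb P (fun i => Q i) = ‖Q - P‖ ^ 2 := by
    rw [StokesAux.norm_sq_eq]; simp [StokesAux.sb, StokesAux.subap]
  have hLn : Real.log (StokesAux.sb P (fun i => Q i)) = 2 * Real.log ‖Q - P‖ := by
    rw [StokesAux.log_norm]
    simp only [StokesAux.sb, StokesAux.subap]
    ring
  rw [StokesAux.subap, StokesAux.subap, ← hSn, hLn]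
  simp only [StokesAux.sb]
  fin_cases k <;> fin_cases j <;> simp only [Fin.zero_eta, Fin.mk_one, Fin.isValue, zero_ne_one, one_ne_zero, not_false_eq_true, if_pos rfl, if_neg, ↓reduceIte] <;>
    · simp only [StokesAux.sb] at hS ⊢
      field_simp
      ring
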